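/- Let Λ = {g_i : A_i → B_i} be a treeing generating an ergodic measure-preserving equivalence relation R_Λ. For any N ≥ 1, g_1,…,g_N ∈ Λ and f_1,…,f_N ∈ L^∞(X), the operator Φ = Σ_{i=1}^N M_{f_i} L_{g_i} satisfies τ(Φ^n) = 0 for all n ≥ 1. -/

import Mathlib

open MeasureTheory

noncomputable section
open scoped Classical

/-- The (pointwise model of the) Feldman–Moore operator `L_g` on functions on `X × X`:
`(L_g Ψ)(x,y) = χ_{g.target}(x) · Ψ(g⁻¹ x, y)`. -/
def FMl {X : Type*} (g : PartialEquiv X X) :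
    (X × X → ℂ) →ₗ[ℂ] (X × X → ℂ) where
  toFun Ψ := fun p => if p.1 ∈ g.target then Ψ (g.symm p.1, p.2) else 0
  map_add' Ψ Φ := by
    funext p; by_cases h : p.1 ∈ g.target <;> simp [h]
  map_smul' c Ψ := by
    funext p; by_cases h : p.1 ∈ g.target <;> simp [h]

/-- The multiplication operator `M_f`: `(M_f Ψ)(x,y) = f(x) Ψ(x,y)`. -/
def FMm {X : Type*} (f : X → ℂ) :
    (X × X → ℂ) →ₗ[ℂ] (X × X → ℂ) where
  toFun Ψ := fun p => f p.1 * Ψ p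
  map_add' Ψ Φ := by funext p; simp [mul_add]
  map_smul' c Ψ := by funext p; simp; ring

/-- `f ∘ g⁻¹`, extended by `0` outside the target of `g`. -/
def extMap {X : Type*} (g : PartialEquiv X X) (f : X → ℂ) : X → ℂ :=
  fun x => if x ∈ g.target then f (g.symm x) else 0

/-- Composition `ω = g₁ g₂ ⋯ g_k` of a list of partial isomorphisms (rightmost acts first). -/
def wordComp {X : Type*} (gs : List (PartialEquiv X X)) : PartialEquiv X X :=
  gs.foldr (fun g acc => acc.trans g) (PartialEquiv.refl X)

/-- `g^n`, the `n`-fold composition of a partial isomorphism with itself. -/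
def pePow {X : Type*} (g : PartialEquiv X X) : ℕ → PartialEquiv X X
  | 0 => PartialEquiv.refl X
  | n + 1 => (pePow g n).trans g

/-- The graph of the partial isomorphism `g` is contained in the relation `R`. -/
def GraphIn {X : Type*} (R : X → X → Prop) (g : PartialEquiv X X) : Prop :=
  ∀ x ∈ g.source, R x (g x)

/-- `g : A → B` is a measure-preserving Borel partial isomorphism. -/
def MeasurePreservingPiso {X : Type*} [MeasurableSpace X] (μ : Measure X)
    (g : PartialEquiv X X) : Prop :=
  MeasurableSet g.source ∧ MeasurableSet g.target ∧
    Measurable (g : X → X) ∧ Measurable (g.symm : X → X) ∧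
    ∀ s : Set X, MeasurableSet s → s ⊆ g.source → μ (g '' s) = μ s


/-- `δ₀`, the characteristic function of the diagonal of `R` (as a function on `X × X`). -/
def diagOne (X : Type*) : X × X → ℂ := fun p => if p.1 = p.2 then 1 else 0


/-- The canonical trace `τ(T) = ⟨T δ₀, δ₀⟩` of the Feldman–Moore construction, written out
via the inner product of `L²(R)`:  `⟨Ψ, Φ⟩ = ∫_X ∑_{z ∼ x} Ψ(x,z) conj (Φ(x,z)) dμ(x)`. -/
def FMtrace {X : Type*} [MeasurableSpace X] (μ : Measure X) (R : X → X → Prop)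
    (T : (X × X → ℂ) →ₗ[ℂ] (X × X → ℂ)) : ℂ :=
  ∫ x, (∑' z : {z : X // R x z}, T (diagOne X) (x, z.1) * (starRingEnd ℂ) (diagOne X (x, z.1))) ∂μ

/-- The equivalence relation `R_Λ` generated by a family of partial isomorphisms. -/
def RLam {X ι : Type*} (Λ : ι → PartialEquiv X X) : X → X → Prop :=
  Relation.EqvGen (fun x y => ∃ i, x ∈ (Λ i).source ∧ (Λ i) x = y)

/-- The partial isomorphism corresponding to a letter `g_i^{±1}`. -/
def letterIso {X ι : Type*} (Λ : ι → PartialEquiv X X) : ι × Bool → PartialEquiv X X :=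
  fun l => if l.2 then Λ l.1 else (Λ l.1).symm

/-- A word is reduced if no letter is followed by its inverse. -/
def IsReducedWord {ι : Type*} (w : List (ι × Bool)) : Prop :=
  w.Chain' fun a b => a.1 ≠ b.1 ∨ a.2 = b.2

/-- `Λ` is a treeing: every nontrivial reduced word has an a.e. trivial fixed-point set. -/
def IsTreeing {X ι : Type*} [MeasurableSpace X] (μ : Measure X)
    (Λ : ι → PartialEquiv X X) : Prop :=
  ∀ w : List (ι × Bool), w ≠ [] → IsReducedWord w →
    μ {x | x ∈ (wordComp (w.map (letterIso Λ))).source ∧ wordComp (w.map (letterIso Λ)) x = x} = 0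

/-- Ergodicity of an equivalence relation: every measurable saturated set is null or conull. -/
def IsErgodicRel {X : Type*} [MeasurableSpace X] (μ : Measure X) (R : X → X → Prop) : Prop :=
  ∀ s : Set X, MeasurableSet s → (∀ x ∈ s, ∀ y, R x y → y ∈ s) → μ s = 0 ∨ μ s = 1

end


section Aux

open MeasureTheory
open scoped Classical

lemma chain'_of_total {α : Type*} {R : α → α → Prop} (h : ∀ a b, R a b) :
    ∀ l : List α, List.Chain' R l
  | [] => List.isChain_nil
  | [a] => List.isChain_singleton a
  | a :: b :: l => List.isChain_cons_cons.mpr ⟨h a b, chain'_of_total h (b :: l)⟩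

lemma isReducedWord_map_true {ι' : Type*} (l : List ι') :
    IsReducedWord (l.map fun i => ((i, true) : ι' × Bool)) := by
  unfold IsReducedWord
  refine (List.isChain_map _).mpr ?_
  exact chain'_of_total (fun a b => Or.inr rfl) l

lemma wordComp_nil {X : Type*} : wordComp ([] : List (PartialEquiv X X)) = PartialEquiv.refl X :=
  rfl

lemma wordComp_cons {X : Type*} (g : PartialEquiv X X) (gs : List (PartialEquiv X X)) :
    wordComp (g :: gs) = (wordComp gs).trans g := rfl

lemma FM_pow_support {X ι : Type*} (Λ : ι → PartialEquiv X X) {N : ℕ}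
    (idx : Fin N → ι) (f : Fin N → X → ℂ) :
    ∀ (n : ℕ) (Ψ : X × X → ℂ) (x y : X),
      (((∑ i, FMm (f i) ∘ₗ FMl (Λ (idx i))) ^ n) Ψ) (x, y) ≠ 0 →
      ∃ w : List (Fin N), w.length = n ∧
        x ∈ (wordComp (w.map fun i => Λ (idx i))).target ∧
        Ψ ((wordComp (w.map fun i => Λ (idx i))).symm x, y) ≠ 0 := by
  intro n
  induction n with
  | zero =>
    intro Ψ x y h
    rw [pow_zero, Module.End.one_apply] at h
    exact ⟨[], rfl, by simp [wordComp_nil], by simpa [wordComp_nil] using h⟩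
  | succ n ih =>
    intro Ψ x y h
    rw [pow_succ', Module.End.mul_apply, LinearMap.sum_apply, Finset.sum_apply] at h
    obtain ⟨i, -, hi⟩ := Finset.exists_ne_zero_of_sum_ne_zero h
    replace hi : f i x * (if x ∈ (Λ (idx i)).target then
        (((∑ j, FMm (f j) ∘ₗ FMl (Λ (idx j))) ^ n) Ψ) ((Λ (idx i)).symm x, y) else 0) ≠ 0 := hi
    have hx : x ∈ (Λ (idx i)).target := by
      by_contra hx
      rw [if_neg hx, mul_zero] at hi
      exact hi rfl
    rw [if_pos hx] at hi
    have hΘ : (((∑ j, FMm (f j) ∘ₗ FMl (Λ (idx j))) ^ n) Ψ) ((Λ (idx i)).symm x, y) ≠ 0 :=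
      fun h0 => hi (by rw [h0, mul_zero])
    obtain ⟨w, hlen, hmem, hval⟩ := ih Ψ ((Λ (idx i)).symm x) y hΘ
    refine ⟨i :: w, by simp [hlen], ?_, ?_⟩
    · rw [List.map_cons, wordComp_cons, PartialEquiv.trans_target]
      exact ⟨hx, hmem⟩
    · rw [List.map_cons, wordComp_cons]
      simpa [PartialEquiv.trans_symm_eq_symm_trans_symm, PartialEquiv.coe_trans] using hval

end Aux

open MeasureTheory in
/-- Let `Λ = {g_i : A_i → B_i}` be a treeing generating an ergodic
measure-preserving equivalence relation `R_Λ`. For any `N ≥ 1`, `g_{i₁}, …, g_{i_N} ∈ Λ` and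
`f_1, …, f_N ∈ L^∞(X)`, the operator `Φ = Σ_{i=1}^N M_{f_i} L_{g_i}` has
`τ(Φⁿ) = 0` for all `n ≥ 1`. -/
theorem FMtrace_pow_eq_zero {X : Type*} [MeasurableSpace X] [StandardBorelSpace X]
    (μ : Measure X) [IsProbabilityMeasure μ] [NullSingletonClass μ]
    {ι : Type*} [Countable ι] (Λ : ι → PartialEquiv X X)
    (hmp : ∀ i, MeasurePreservingPiso μ (Λ i))
    (htree : IsTreeing μ Λ) (herg : IsErgodicRel μ (RLam Λ))
    (N : ℕ) (hN : 1 ≤ N) (idx : Fin N → ι) (f : Fin N → X → ℂ)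
    (hf : ∀ i, MemLp (f i) ⊤ μ) :
    ∀ n : ℕ, 1 ≤ n →
      FMtrace μ (RLam Λ) ((∑ i, FMm (f i) ∘ₗ FMl (Λ (idx i))) ^ n) = 0 := by
  intro n hn
  set ω : List (Fin N) → PartialEquiv X X := fun w => wordComp (w.map fun i => Λ (idx i)) with hω
  have hbad : ∀ w : List (Fin N), w ≠ [] →
      μ {x | x ∈ (ω w).target ∧ (ω w).symm x = x} = 0 := by
    intro w hw
    have hmap : ((w.map idx).map fun j => ((j, true) : ι × Bool)).map (letterIso Λ)
        = w.map fun i => Λ (idx i) := by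
      simp [List.map_map, letterIso, Function.comp]
    have htr := htree ((w.map idx).map fun j => ((j, true) : ι × Bool)) (by simpa using hw)
      (isReducedWord_map_true _)
    rw [hmap] at htr
    refine measure_mono_null ?_ htr
    rintro x ⟨h1, h2⟩
    constructor
    · rw [← h2]; exact (ω w).map_target h1
    · conv_lhs => rw [← h2]
      exact (ω w).right_inv h1
  have hU : μ (⋃ w : List (Fin N), ⋃ (_ : w ≠ []),
      {x | x ∈ (ω w).target ∧ (ω w).symm x = x}) = 0 :=
    measure_iUnion_null fun w => measure_iUnion_null fun hw => hbad w hw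
  have hae := (measure_eq_zero_iff_ae_notMem (μ := μ)).mp hU
  unfold FMtrace
  apply integral_eq_zero_of_ae
  filter_upwards [hae] with x hx
  have hdiag : (((∑ i, FMm (f i) ∘ₗ FMl (Λ (idx i))) ^ n) (diagOne X)) (x, x) = 0 := by
    by_contra h
    obtain ⟨w, hlen, hmem, hval⟩ := FM_pow_support Λ idx f n (diagOne X) x x h
    have hwne : w ≠ [] := by
      intro e; rw [e] at hlen; simp at hlen; omega
    have hfix : (ω w).symm x = x := by
      by_contra hne
      exact hval (by simp [diagOne]; exact hne)
    exact hx (Set.mem_iUnion.2 ⟨w, Set.mem_iUnion.2 ⟨hwne, hmem, hfix⟩⟩)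
  have hterm : ∀ z : {z : X // RLam Λ x z},
      (((∑ i, FMm (f i) ∘ₗ FMl (Λ (idx i))) ^ n) (diagOne X)) (x, z.1)
        * (starRingEnd ℂ) (diagOne X (x, z.1)) = 0 := by
    intro z
    by_cases hz : x = z.1
    · rw [← hz, hdiag, zero_mul]
    · have h0 : diagOne X (x, z.1) = 0 := by simp [diagOne, hz]
      rw [h0, map_zero, mul_zero]
  show (∑' z : {z : X // RLam Λ x z}, _) = _
  calc (∑' z : {z : X // RLam Λ x z},
        (((∑ i, FMm (f i) ∘ₗ FMl (Λ (idx i))) ^ n) (diagOne X)) (x, z.1)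
          * (starRingEnd ℂ) (diagOne X (x, z.1)))
      = ∑' _ : {z : X // RLam Λ x z}, (0 : ℂ) := tsum_congr hterm
    _ = 0 := tsum_zero
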